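/- (Lebesgue) If n and p are positive integers with p prime, r ≥ 1, and n^2 + 1 = p^r, then r = 1. -/

import Mathlib

open Finset

lemma LN.choose_id (r t : ℕ) (ht : 1 ≤ t) (h : 2*t ≤ r) :
    r.choose (2*t) * ((2*t).choose 2) = r.choose 2 * ((r-2).choose (2*t-2)) := by
  have e1 : (2*t).choose 2 * (Nat.factorial 2) * (2*t-2).factorial = (2*t).factorial :=
    Nat.choose_mul_factorial_mul_factorial (by omega)
  have e2 : r.choose (2*t) * (2*t).factorial * (r-2*t).factorial = r.factorial :=
    Nat.choose_mul_factorial_mul_factorial h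
  have e3 : (r-2).choose (2*t-2) * (2*t-2).factorial * (r-2*t).factorial = (r-2).factorial := by
    have := Nat.choose_mul_factorial_mul_factorial (n := r-2) (k := 2*t-2) (by omega)
    have hrw : r - 2 - (2*t-2) = r - 2*t := by omega
    rwa [hrw] at this
  have e4 : r.choose 2 * (Nat.factorial 2) * (r-2).factorial = r.factorial :=
    Nat.choose_mul_factorial_mul_factorial (by omega)
  have hF : ((Nat.factorial 2 : ℤ) * (2*t-2).factorial * (r-2*t).factorial) ≠ 0 := by
    positivity
  have key : ((r.choose (2*t) * ((2*t).choose 2) : ℕ) : ℤ)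
      * ((Nat.factorial 2 : ℤ) * (2*t-2).factorial * (r-2*t).factorial)
      = ((r.choose 2 * ((r-2).choose (2*t-2)) : ℕ) : ℤ)
      * ((Nat.factorial 2 : ℤ) * (2*t-2).factorial * (r-2*t).factorial) := by
    push_cast
    have e1' : ((2*t).choose 2 : ℤ) * (Nat.factorial 2) * (2*t-2).factorial = (2*t).factorial := by
      exact_mod_cast congrArg (Nat.cast : ℕ → ℤ) e1
    have e2' : (r.choose (2*t) : ℤ) * (2*t).factorial * (r-2*t).factorial = r.factorial := by
      exact_mod_cast congrArg (Nat.cast : ℕ → ℤ) e2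
    have e3' : ((r-2).choose (2*t-2) : ℤ) * (2*t-2).factorial * (r-2*t).factorial = (r-2).factorial := by
      exact_mod_cast congrArg (Nat.cast : ℕ → ℤ) e3
    have e4' : (r.choose 2 : ℤ) * (Nat.factorial 2) * (r-2).factorial = r.factorial := by
      exact_mod_cast congrArg (Nat.cast : ℕ → ℤ) e4
    linear_combination (r.choose (2*t) : ℤ) * ((r-2*t).factorial) * e1' + e2' - (r.choose 2 : ℤ) * (Nat.factorial 2) * e3' - e4'
  exact_mod_cast mul_right_cancel₀ hF key

lemma LN.choose_two_decomp (r w s : ℕ) (hw : 1 ≤ w) (hrs : r - 1 = 2^w * s) :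
    r.choose 2 = r * 2^(w-1) * s := by
  rw [Nat.choose_two_right]
  have h2w : 2^w = 2 * 2^(w-1) := by
    conv_lhs => rw [show w = 1 + (w-1) by omega]
    rw [pow_add, pow_one]
  rw [hrs, h2w]
  have : r * (2 * 2 ^ (w - 1) * s) = 2 * (r * 2^(w-1) * s) := by ring
  rw [this, Nat.mul_div_cancel_left _ (by norm_num)]

lemma LN.key_dvd (r t v w A' : ℕ) (ht : 2 ≤ t) (h2t : 2*t ≤ r)
    (hv : 1 ≤ v) (hw : 1 ≤ w) (s : ℕ) (hrs : r - 1 = 2^w * s) :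
    2^(w + 2*v) ∣ r.choose (2*t) * (2^v * A')^(2*t) := by
  have hA : (2^v * A')^(2*t) = 2^(2*t*v) * A'^(2*t) := by
    rw [mul_pow, ← pow_mul, mul_comm v (2*t)]
  have hid := LN.choose_id r t (by omega) h2t
  have hch2 : (2*t).choose 2 = t * (2*t-1) := by
    rw [Nat.choose_two_right]
    have : 2*t*(2*t-1) = 2*(t*(2*t-1)) := by ring
    rw [this, Nat.mul_div_cancel_left _ (by norm_num)]
  have hc2 := LN.choose_two_decomp r w s hw hrs
  have hdvd1 : 2^(w-1) ∣ r.choose (2*t) * t * (2*t-1) := by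
    have h1 : 2^(w-1) ∣ r.choose 2 * ((r-2).choose (2*t-2)) := by
      rw [hc2]; exact ⟨r * s * ((r-2).choose (2*t-2)), by ring⟩
    rw [← hid, hch2] at h1
    rwa [mul_assoc]
  have hcop : Nat.Coprime (2^(w-1)) (2*t-1) := by
    apply Nat.Coprime.pow_left
    rw [Nat.Prime.coprime_iff_not_dvd Nat.prime_two]
    omega
  have hdvd2 : 2^(w-1) ∣ r.choose (2*t) * t := hcop.dvd_of_dvd_mul_right hdvd1
  obtain ⟨e, t', ht', htet⟩ := Nat.exists_eq_two_pow_mul_odd (n := t) (by omega)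
  have het : e + 1 ≤ t := by
    have h1 : e < 2^e := Nat.lt_two_pow_self
    have h2 : 2^e ≤ t := by
      rw [htet]; exact Nat.le_mul_of_pos_right _ (by rcases ht' with ⟨k,hk⟩; omega)
    omega
  rcases le_or_gt e (w-1) with hew | hew
  · have hre : r.choose (2*t) * t = (r.choose (2*t) * 2^e) * t' := by rw [htet]; ring
    rw [hre] at hdvd2
    have hcop2 : Nat.Coprime (2^(w-1)) t' := by
      apply Nat.Coprime.pow_left
      rw [Nat.Prime.coprime_iff_not_dvd Nat.prime_two]
      rw [Nat.odd_iff] at ht'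
      omega
    have hdvd3 : 2^(w-1) ∣ r.choose (2*t) * 2^e := hcop2.dvd_of_dvd_mul_right hdvd2
    have hdvd4 : 2^(w-1-e) ∣ r.choose (2*t) := by
      have hre2 : (2:ℕ)^(w-1) = 2^(w-1-e) * 2^e := by rw [← pow_add]; congr 1; omega
      rw [hre2] at hdvd3
      exact (Nat.mul_dvd_mul_iff_right (Nat.pow_pos (n := e) (by norm_num))).mp hdvd3
    have a1 : t ≤ t*v := Nat.le_mul_of_pos_right _ hv
    have a2 : 2*v ≤ t*v := Nat.mul_le_mul_right v ht
    have hexp : w + 2*v ≤ (w-1-e) + 2*t*v := by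
      have : 2*t*v = t*v + t*v := by ring
      omega
    calc (2:ℕ)^(w+2*v) ∣ 2^((w-1-e) + 2*t*v) := pow_dvd_pow 2 hexp
      _ = 2^(w-1-e) * 2^(2*t*v) := pow_add 2 _ _
      _ ∣ r.choose (2*t) * (2^v * A')^(2*t) := by
          rw [hA]; exact mul_dvd_mul hdvd4 (Dvd.dvd.mul_right dvd_rfl _)
  · have a1 : t ≤ t*v := Nat.le_mul_of_pos_right _ hv
    have a2 : 2*v ≤ t*v := Nat.mul_le_mul_right v ht
    have hexp : w + 2*v ≤ 2*t*v := by
      have : 2*t*v = t*v + t*v := by ring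
      omega
    calc (2:ℕ)^(w+2*v) ∣ 2^(2*t*v) := pow_dvd_pow 2 hexp
      _ ∣ (2^v * A')^(2*t) := by rw [hA]; exact Dvd.dvd.mul_right dvd_rfl _
      _ ∣ r.choose (2*t) * (2^v * A')^(2*t) := Dvd.dvd.mul_left dvd_rfl _


def LN.imHom : GaussianInt →+ ℤ where
  toFun := Zsqrtd.im
  map_zero' := rfl
  map_add' := fun _ _ => rfl

def LN.e (k : ℕ) : ℤ := ((⟨0,1⟩ : GaussianInt)^k).im

lemma LN.I_sq : ((⟨0,1⟩ : GaussianInt))^2 = -1 := by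
  ext <;> simp [pow_two, Zsqrtd.re_mul, Zsqrtd.im_mul]

lemma LN.e_even (j : ℕ) : LN.e (2*j) = 0 := by
  unfold LN.e
  rw [pow_mul, LN.I_sq]
  have : ((-1 : GaussianInt))^j = (((-1:ℤ)^j : ℤ) : GaussianInt) := by push_cast; ring
  rw [this, Zsqrtd.im_intCast]

lemma LN.e_odd (j : ℕ) : LN.e (2*j+1) = (-1)^j := by
  unfold LN.e
  rw [pow_succ, pow_mul, LN.I_sq]
  rcases Nat.even_or_odd j with hj | hj
  · rw [hj.neg_one_pow, hj.neg_one_pow, one_mul]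
  · rw [hj.neg_one_pow, hj.neg_one_pow, neg_one_mul, Zsqrtd.im_neg]

lemma LN.unit_sq (u : GaussianInt) (hu : IsUnit u) : u^2 = 1 ∨ u^2 = -1 := by
  have hn : u.norm.natAbs = 1 := Zsqrtd.norm_eq_one_iff.mpr hu
  have hn1 : u.norm = 1 := by
    have := GaussianInt.norm_nonneg u
    omega
  have h1 : u.re * u.re + u.im * u.im = 1 := by
    have := Zsqrtd.norm_def u
    rw [this] at hn1
    linarith [hn1]
  rcases eq_or_ne u.re 0 with hre | hre
  · right
    have him : u.im * u.im = 1 := by rw [hre] at h1; linarith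
    ext
    · simp [pow_two, Zsqrtd.re_mul, hre, him]
    · simp [pow_two, Zsqrtd.im_mul, hre]
  · left
    have h2 : 0 < u.re * u.re := mul_self_pos.mpr hre
    have h3 : 0 ≤ u.im * u.im := mul_self_nonneg _
    have h4 : 1 ≤ u.re * u.re := by
      rcases lt_or_ge (u.re*u.re) 1 with h | h
      · interval_cases h5 : (u.re * u.re) <;> omega
      · exact h
    have him : u.im * u.im = 0 := by linarith
    have him0 : u.im = 0 := mul_self_eq_zero.mp him
    have hre1 : u.re * u.re = 1 := by rw [him0] at h1; linarith
    ext
    · simp [pow_two, Zsqrtd.re_mul, him0, hre1]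
    · simp [pow_two, Zsqrtd.im_mul, him0]

lemma LN.unit_pow_four (u : GaussianInt) (hu : IsUnit u) : u^4 = 1 := by
  have : u^4 = (u^2)^2 := by ring
  rcases LN.unit_sq u hu with h | h <;> rw [this, h] <;> ring

lemma LN.unit_rpow (u : GaussianInt) (hu : IsUnit u) (r : ℕ) (hodd : r % 2 = 1) :
    ∃ w : GaussianInt, w^r = u := by
  have h4 := LN.unit_pow_four u hu
  have key : ∀ m : ℕ, m % 4 = 1 → u^m = u := by
    intro m hm
    conv_lhs => rw [show m = 4*(m/4) + 1 by omega]
    rw [pow_add, pow_mul, h4, one_pow, pow_one, one_mul]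
  rcases Nat.even_or_odd (r/2) with hh | hh
  · refine ⟨u, key r ?_⟩
    rcases hh with ⟨j, hj⟩; omega
  · refine ⟨u^3, ?_⟩
    rw [← pow_mul]
    apply key
    rcases hh with ⟨j, hj⟩; omega


theorem lebesgue_nagell (n p r : ℕ) (hn : 1 ≤ n) (hp : p.Prime) (hr : 1 ≤ r)
    (h : n ^ 2 + 1 = p ^ r) : r = 1 := by
  by_contra hr1
  have hr2 : 2 ≤ r := by omega
  -- p is odd
  have hp2 : p ≠ 2 := by
    rintro rfl
    have h4 : 4 ∣ 2^r := by
      have h' : (2:ℕ)^2 ∣ 2^r := pow_dvd_pow 2 hr2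
      simpa using h'
    rw [← h] at h4
    rcases Nat.even_or_odd n with ⟨m, rfl⟩ | ⟨m, rfl⟩
    · have : (m+m)^2 = 4*m^2 := by ring
      omega
    · have : (2*m+1)^2 = 4*(m^2+m)+1 := by ring
      omega
  have hpodd : p % 2 = 1 := Nat.odd_iff.mp (hp.odd_of_ne_two hp2)
  -- n is even
  have hprodd : p^r % 2 = 1 := Nat.odd_iff.mp ((Nat.odd_iff.mpr hpodd).pow)
  have hneven : n % 2 = 0 := by
    rcases Nat.even_or_odd n with he | ⟨m, rfl⟩
    · exact Nat.even_iff.mp he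
    · exfalso
      have : (2*m+1)^2 = 2*(2*m^2+2*m)+1 := by ring
      omega
  -- r is odd
  have hrodd : r % 2 = 1 := by
    by_contra hre
    obtain ⟨k, hk⟩ : 2 ∣ r := by omega
    have hmn : n < p^k := by
      have h2 : (n:ℕ)^2 < (p^k)^2 := by
        rw [← pow_mul, mul_comm k 2, ← hk]
        omega
      exact lt_of_pow_lt_pow_left₀ 2 (Nat.zero_le _) h2
    have h3 : (n+1)^2 ≤ (p^k)^2 := Nat.pow_le_pow_left (by omega) 2
    rw [← pow_mul, mul_comm k 2, ← hk] at h3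
    have : (n+1)^2 = n^2 + 2*n + 1 := by ring
    omega
  have hr3 : 3 ≤ r := by omega
  -- move to Gaussian integers
  set x : GaussianInt := ⟨(n:ℤ), 1⟩ with hxdef
  have hxy : x * ⟨(n:ℤ), -1⟩ = ((p:GaussianInt))^r := by
    have h1 : x * ⟨(n:ℤ), -1⟩ = (⟨(n:ℤ)^2+1, 0⟩ : GaussianInt) := by
      ext
      · simp [hxdef, Zsqrtd.re_mul]; ring
      · simp [hxdef, Zsqrtd.im_mul]
    have h2 : (⟨(n:ℤ)^2+1, 0⟩ : GaussianInt) = (((p^r : ℕ) : ℤ) : GaussianInt) := by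
      rw [show ((p^r : ℕ):ℤ) = (n:ℤ)^2+1 by exact_mod_cast h.symm]
      ext
      · simp only [Zsqrtd.re_intCast]
      · simp only [Zsqrtd.im_intCast]
    rw [h1, h2]
    push_cast
    ring
  have hcop : IsCoprime x (⟨(n:ℤ), -1⟩ : GaussianInt) := by
    obtain ⟨n', hn'⟩ : 2 ∣ n := by omega
    refine ⟨⟨(n:ℤ), 2*(n':ℤ)^2 - 1⟩, ⟨0, -(2*(n':ℤ)^2)⟩, ?_⟩
    have hnn : (n:ℤ) = 2*(n':ℤ) := by exact_mod_cast congrArg (Nat.cast : ℕ → ℤ) hn'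
    ext
    · simp [hxdef, Zsqrtd.re_mul, Zsqrtd.re_add, Zsqrtd.re_one]
      rw [hnn]; ring
    · simp [hxdef, Zsqrtd.im_mul, Zsqrtd.im_add, Zsqrtd.im_one]
      ring
  obtain ⟨d0, u, hu⟩ := exists_associated_pow_of_mul_eq_pow' hcop hxy
  obtain ⟨wu, hwu⟩ := LN.unit_rpow (↑u) u.isUnit r hrodd
  set z : GaussianInt := d0 * wu with hzdef
  have hz : z^r = x := by rw [hzdef, mul_pow, hwu, hu]
  set a : ℤ := z.re with hadef
  set b : ℤ := z.im with hbdef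
  -- b = ±1
  have hzsub : z - ((a : ℤ) : GaussianInt) = ((b : ℤ) : GaussianInt) * ⟨0,1⟩ := by
    ext
    · simp [Zsqrtd.re_sub, Zsqrtd.re_intCast, Zsqrtd.re_mul, Zsqrtd.im_intCast, hadef]
    · simp [Zsqrtd.im_sub, Zsqrtd.im_intCast, Zsqrtd.im_mul, Zsqrtd.re_intCast, hbdef]
  have hbdvd : ((b:ℤ) : GaussianInt) ∣ z^r - ((a:ℤ) : GaussianInt)^r :=
    dvd_trans (dvd_def.mpr ⟨⟨0,1⟩, hzsub⟩) (sub_dvd_pow_sub_pow z _ r)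
  have hbim : b ∣ 1 := by
    have h2 := ((Zsqrtd.intCast_dvd b _).mp hbdvd).2
    have h4 : ((a:ℤ) : GaussianInt)^r = (((a^r : ℤ)) : GaussianInt) := by push_cast; ring
    rw [Zsqrtd.im_sub, hz] at h2
    have h5 : (((a:ℤ) : GaussianInt)^r).im = 0 := by rw [h4, Zsqrtd.im_intCast]
    rw [h5] at h2
    simpa [hxdef] using h2
  have hb1 : b = 1 ∨ b = -1 := Int.isUnit_iff.mp (isUnit_of_dvd_one hbim)
  have hb2 : b * b = 1 := by rcases hb1 with hb | hb <;> rw [hb] <;> norm_num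
  -- norm of z is p
  have hnormpow : ∀ m : ℕ, (z^m).norm = z.norm^m := by
    intro m
    induction m with
    | zero => simp
    | succ k ih => rw [pow_succ, Zsqrtd.norm_mul, ih, pow_succ]
  have hnx : x.norm = ((p^r : ℕ) : ℤ) := by
    rw [Zsqrtd.norm_def]
    simp only [hxdef]
    push_cast [← h]
    ring
  have hznr : z.norm ^ r = ((p : ℤ))^r := by
    rw [← hnormpow, hz, hnx]; push_cast; ring
  have hznormp : z.norm = (p : ℤ) := by
    have h1 : (z.norm).natAbs ^ r = p ^ r := by
      have h2 := congrArg Int.natAbs hznr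
      rwa [Int.natAbs_pow, Int.natAbs_pow, Int.natAbs_natCast] at h2
    have h2 : (z.norm).natAbs = p := Nat.pow_left_injective (by omega) h1
    have h3 : 0 ≤ z.norm := GaussianInt.norm_nonneg z
    rw [← h2, Int.natAbs_of_nonneg h3]
  have hab : a*a + b*b = (p:ℤ) := by
    have hd := Zsqrtd.norm_def z
    rw [hznormp] at hd
    rw [← hadef, ← hbdef] at hd
    linarith [hd]
  have hap : a*a = (p:ℤ) - 1 := by linarith [hab, hb2]
  have hpz1 : 1 < (p:ℤ) := by exact_mod_cast hp.one_lt
  have ha0 : a ≠ 0 := by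
    rintro ha
    rw [ha] at hap
    simp at hap
    omega
  have hpzodd : (p:ℤ) % 2 = 1 := by omega
  have haeven : a % 2 = 0 := by
    rcases Int.even_or_odd a with ⟨m, hm⟩ | ⟨m, hm⟩
    · omega
    · exfalso
      have hexp : (2*m+1)*(2*m+1) = 2*(2*m^2+2*m)+1 := by ring
      rw [hm] at hap
      omega
  set A := a.natAbs with hAdef
  have hA0 : A ≠ 0 := Int.natAbs_ne_zero.mpr ha0
  have hAeven : A % 2 = 0 := by
    have h1 : Even a := Int.even_iff.mpr haeven
    have h2 : Even A := Int.natAbs_even.mpr h1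
    exact Nat.even_iff.mp h2
  obtain ⟨v, A', hA'odd, hAv⟩ := Nat.exists_eq_two_pow_mul_odd hA0
  have hv1 : 1 ≤ v := by
    rcases Nat.eq_zero_or_pos v with hv | hv
    · exfalso
      rw [hv, pow_zero, one_mul] at hAv
      rcases hA'odd with ⟨j, hj⟩
      omega
    · exact hv
  obtain ⟨w, s, hsodd, hws⟩ := Nat.exists_eq_two_pow_mul_odd (n := r - 1) (by omega)
  have hw1 : 1 ≤ w := by
    rcases Nat.eq_zero_or_pos w with hw | hw
    · exfalso
      rw [hw, pow_zero, one_mul] at hws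
      rcases hsodd with ⟨j, hj⟩
      omega
    · exact hw
  -- binomial expansion of z^r
  have hzI : z = ((b:ℤ) : GaussianInt) * ⟨0,1⟩ + ((a:ℤ) : GaussianInt) := by
    ext
    · simp [Zsqrtd.re_add, Zsqrtd.re_mul, Zsqrtd.re_intCast, Zsqrtd.im_intCast, hadef]
    · simp [Zsqrtd.im_add, Zsqrtd.im_mul, Zsqrtd.re_intCast, Zsqrtd.im_intCast, hbdef]
  have hexp : z^r = ∑ k ∈ range (r+1),
      (((b:ℤ):GaussianInt) * ⟨0,1⟩)^k * ((a:ℤ):GaussianInt)^(r-k) * (r.choose k : GaussianInt) := by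
    conv_lhs => rw [hzI]
    exact add_pow _ _ r
  have hterm : ∀ k : ℕ, ((((b:ℤ):GaussianInt) * ⟨0,1⟩)^k * ((a:ℤ):GaussianInt)^(r-k)
      * (r.choose k : GaussianInt))
      = (((b^k * a^(r-k) * (r.choose k : ℤ)) : ℤ) : GaussianInt) * (⟨0,1⟩ : GaussianInt)^k := by
    intro k; push_cast; ring
  have hmulim : ∀ (q : ℤ) (y : GaussianInt), (((q:ℤ) : GaussianInt) * y).im = q * y.im := by
    intro q y; simp [Zsqrtd.im_mul, Zsqrtd.re_intCast, Zsqrtd.im_intCast]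
  have him : (1:ℤ) = ∑ k ∈ range (r+1), (b^k * a^(r-k) * (r.choose k : ℤ)) * LN.e k := by
    have h1 : (1:ℤ) = (z^r).im := by rw [hz]
    rw [h1]
    calc (z^r).im = LN.imHom (z^r) := rfl
      _ = LN.imHom (∑ k ∈ range (r+1),
            (((b:ℤ):GaussianInt) * ⟨0,1⟩)^k * ((a:ℤ):GaussianInt)^(r-k) * (r.choose k : GaussianInt)) := by
          rw [← hexp]
      _ = ∑ k ∈ range (r+1), LN.imHom ((((b:ℤ):GaussianInt) * ⟨0,1⟩)^k
            * ((a:ℤ):GaussianInt)^(r-k) * (r.choose k : GaussianInt)) := map_sum _ _ _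
      _ = ∑ k ∈ range (r+1), (b^k * a^(r-k) * (r.choose k : ℤ)) * LN.e k := by
          refine Finset.sum_congr rfl fun k _ => ?_
          rw [show LN.imHom ((((b:ℤ):GaussianInt) * ⟨0,1⟩)^k * ((a:ℤ):GaussianInt)^(r-k)
            * (r.choose k : GaussianInt)) = ((((b:ℤ):GaussianInt) * ⟨0,1⟩)^k
            * ((a:ℤ):GaussianInt)^(r-k) * (r.choose k : GaussianInt)).im from rfl, hterm k]
          exact hmulim _ _
  set c : ℕ → ℤ := fun k => (b^k * a^(r-k) * (r.choose k : ℤ)) * LN.e k with hcdef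
  have hsplit : ∑ k ∈ range r, c k + c r = 1 := by
    rw [← Finset.sum_range_succ]; exact him.symm
  have hcr : c r = b^r * LN.e r := by
    simp [hcdef, Nat.sub_self]
  obtain ⟨jr, hjr⟩ : ∃ j, r = 2*j+1 := ⟨r/2, by omega⟩
  have her : LN.e r = (-1)^jr := by rw [hjr]; exact LN.e_odd jr
  have hcrsq : c r * c r = 1 := by
    rw [hcr, her, show (b^r*(-1:ℤ)^jr) * (b^r*(-1)^jr) = (b*b)^r * ((-1)^(jr+jr)) from by ring,
      hb2, one_pow, Even.neg_one_pow ⟨jr, rfl⟩, one_mul]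
  have hcr1 : c r = 1 ∨ c r = -1 := mul_self_eq_one_iff.mp hcrsq
  have ha4 : (4:ℤ) ∣ a^2 := by
    obtain ⟨m, hm⟩ : (2:ℤ) ∣ a := by omega
    exact ⟨m^2, by rw [hm]; ring⟩
  have h4dvd : ∀ k ∈ range r, (4:ℤ) ∣ c k := by
    intro k hk
    rcases Nat.even_or_odd k with ⟨j, hj⟩ | hodd
    · have he0 : LN.e k = 0 := by rw [show k = 2*j by omega]; exact LN.e_even j
      have : c k = 0 := by rw [hcdef]; simp [he0]
      rw [this]
      exact dvd_zero _
    · have hk2 : 2 ≤ r - k := by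
        rcases hodd with ⟨j, hj⟩
        have := mem_range.mp hk
        omega
      have hck : c k = a^2 * (b^k * a^(r-k-2) * (r.choose k : ℤ) * LN.e k) := by
        rw [hcdef]
        simp only
        rw [show r - k = 2 + (r-k-2) by omega, pow_add, Nat.add_sub_cancel_left]
        ring
      rw [hck]
      exact Dvd.dvd.mul_right ha4 _
  have hc4 : (4:ℤ) ∣ (1 - c r) := by
    have h1 := Finset.dvd_sum h4dvd
    rw [show (1:ℤ) - c r = ∑ k ∈ range r, c k by linarith [hsplit]]
    exact h1
  have hcr2 : c r = 1 := by
    rcases hcr1 with h1 | h1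
    · exact h1
    · exfalso; rw [h1] at hc4; norm_num at hc4
  have hsum0 : ∑ k ∈ range r, c k = 0 := by linarith [hsplit]
  -- isolate the k = r-2 term
  have hmem : r - 2 ∈ range r := mem_range.mpr (by omega)
  have hsplit2 : ∑ k ∈ (range r).erase (r-2), c k + c (r-2) = 0 := by
    rw [Finset.sum_erase_add _ _ hmem]; exact hsum0
  have haA2 : a^2 = ((A:ℤ))^2 := by
    rw [hAdef, ← Int.abs_eq_natAbs, sq_abs]
  set D : ℤ := ((2^(w + 2*v) : ℕ) : ℤ) with hDdef
  have hDdvd : ∀ k ∈ (range r).erase (r-2), D ∣ c k := by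
    intro k hk
    obtain ⟨hkne, hkr⟩ := Finset.mem_erase.mp hk
    have hkr' := mem_range.mp hkr
    rcases Nat.even_or_odd k with ⟨j, hj⟩ | hodd
    · have he0 : LN.e k = 0 := by rw [show k = 2*j by omega]; exact LN.e_even j
      have : c k = 0 := by rw [hcdef]; simp [he0]
      rw [this]
      exact dvd_zero D
    · set t := (r - k)/2 with htdef
      have h2t : 2*t = r - k := by rcases hodd with ⟨j,hj⟩; omega
      have ht2 : 2 ≤ t := by rcases hodd with ⟨j,hj⟩; omega
      have hkey := LN.key_dvd r t v w A' ht2 (by omega) hv1 hw1 s hws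
      rw [← hAv] at hkey
      have haA : a^(r-k) = ((A:ℤ))^(r-k) := by
        rw [← h2t, pow_mul, pow_mul, haA2]
      have hchoose : (r.choose k) = r.choose (2*t) := by
        rw [h2t]; exact (Nat.choose_symm (by omega)).symm
      have hc : c k = ((r.choose (2*t) * A^(2*t) : ℕ) : ℤ) * (b^k * LN.e k) := by
        rw [hcdef]
        simp only
        rw [haA, hchoose, ← h2t]
        push_cast
        ring
      rw [hc]
      exact Dvd.dvd.mul_right (Int.natCast_dvd_natCast.mpr hkey) _
  have hDcr2 : D ∣ c (r-2) := by
    have h1 : D ∣ ∑ k ∈ (range r).erase (r-2), c k := Finset.dvd_sum hDdvd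
    have h2 : c (r-2) = -∑ k ∈ (range r).erase (r-2), c k := by linarith [hsplit2]
    rw [h2]
    exact dvd_neg.mpr h1
  obtain ⟨j2, hj2⟩ : ∃ j, r - 2 = 2*j+1 := ⟨(r-3)/2, by omega⟩
  have he2 : LN.e (r-2) = (-1)^j2 := by rw [hj2]; exact LN.e_odd j2
  have hesq : LN.e (r-2) * LN.e (r-2) = 1 := by
    rw [he2, ← pow_add]; exact Even.neg_one_pow ⟨j2, rfl⟩
  have hbsq : b^(r-2) * b^(r-2) = 1 := by
    rw [← mul_pow, hb2, one_pow]
  have hfin : c (r-2) * (b^(r-2) * LN.e (r-2)) = ((r.choose 2 * A^2 : ℕ) : ℤ) := by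
    rw [hcdef]
    simp only
    rw [show r - (r-2) = 2 by omega, haA2, Nat.choose_symm (show 2 ≤ r by omega)]
    push_cast
    linear_combination ((A:ℤ)^2 * (r.choose 2 : ℤ) * LN.e (r-2) * LN.e (r-2)) * hbsq
      + ((A:ℤ)^2 * (r.choose 2 : ℤ)) * hesq
  have hDnat : 2^(w+2*v) ∣ r.choose 2 * A^2 := by
    have hDfin : D ∣ ((r.choose 2 * A^2 : ℕ) : ℤ) := by
      rw [← hfin]; exact Dvd.dvd.mul_right hDcr2 _
    rw [hDdef] at hDfin
    exact_mod_cast hDfin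
  have hfin2 : r.choose 2 * A^2 = 2^(w-1+2*v) * (r * s * A'^2) := by
    rw [LN.choose_two_decomp r w s hw1 hws, hAv, mul_pow, ← pow_mul, pow_add]
    ring
  rw [hfin2, show w+2*v = (w-1+2*v)+1 by omega, pow_succ] at hDnat
  have h2dvd : 2 ∣ r*s*A'^2 :=
    (mul_dvd_mul_iff_left (pow_ne_zero (w-1+2*v) (two_ne_zero))).mp hDnat
  have hor : Odd r := ⟨jr, by omega⟩
  have hoddp : Odd (r*s*A'^2) := (hor.mul hsodd).mul (hA'odd.pow)
  rw [Nat.odd_iff] at hoddp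
  omega
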